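/- Let $\mathscr{H}$ be a Hilbert space and $\{x_j\}_{j\in\mathbb{N}}$ a sequence of vectors in $\mathscr{H}$. Then $(\sum_{j\in\mathbb{N}} \|x_j\|^2)^{1/2} \le 2 \cdot \sup_{J_0} \|\sum_{j\in J_0} x_j\|$, where the supremum is taken over all finite subsets $J_0 \subseteq \mathbb{N}$. -/

import Mathlib

open scoped ENNReal

lemma key_sign_split {H : Type*} [NormedAddCommGroup H] [InnerProductSpace ℝ H]
    (x : ℕ → H) (J : Finset ℕ) :
    ∃ K ⊆ J, ∑ j ∈ J, ‖x j‖ ^ 2 ≤ ‖(∑ j ∈ K, x j) - ∑ j ∈ J \ K, x j‖ ^ 2 := by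
  induction J using Finset.induction_on with
  | empty => exact ⟨∅, Finset.Subset.refl _, by simp⟩
  | insert a J ha ih =>
    obtain ⟨K, hK, hle⟩ := ih
    set d := (∑ j ∈ K, x j) - ∑ j ∈ J \ K, x j with hd
    have haK : a ∉ K := fun h => ha (hK h)
    have hpar := parallelogram_law_with_norm ℝ (x a) d
    have hsum : ∑ j ∈ insert a J, ‖x j‖ ^ 2 = ‖x a‖ ^ 2 + ∑ j ∈ J, ‖x j‖ ^ 2 :=
      Finset.sum_insert ha
    rcases le_total (‖x a - d‖ ^ 2) (‖x a + d‖ ^ 2) with hc | hc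
    · refine ⟨insert a K, Finset.insert_subset_insert a hK, ?_⟩
      have hdiff : insert a J \ insert a K = J \ K := by
        rw [Finset.insert_sdiff_insert]
        exact Finset.sdiff_insert_of_notMem ha K
      have hsK : ∑ j ∈ insert a K, x j = x a + ∑ j ∈ K, x j := Finset.sum_insert haK
      rw [hdiff, hsK]
      have : (x a + ∑ j ∈ K, x j) - ∑ j ∈ J \ K, x j = x a + d := by
        rw [hd]; abel
      rw [this, hsum]
      nlinarith [hle, hpar, hc]
    · refine ⟨K, hK.trans (Finset.subset_insert a J), ?_⟩
      have hdiff : insert a J \ K = insert a (J \ K) :=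
        Finset.insert_sdiff_of_notMem J haK
      rw [hdiff, Finset.sum_insert (s := J \ K) (by simp [ha])]
      have : (∑ j ∈ K, x j) - (x a + ∑ j ∈ J \ K, x j) = -(x a - d) := by
        rw [hd]; abel
      rw [this, norm_neg, hsum]
      nlinarith [hle, hpar, hc]

/-- If `H` is a Hilbert space and `x : ℕ → H`, then
`(∑ ‖x j‖²)^{1/2} ≤ 2 ⨆_{J₀ finite} ‖∑_{j ∈ J₀} x j‖`, in `[0,∞]`. -/
theorem sq_sum_le_two_mul_sup_finset_sum {H : Type*} [NormedAddCommGroup H]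
    [InnerProductSpace ℝ H] [CompleteSpace H] (x : ℕ → H) :
    (∑' j : ℕ, (‖x j‖₊ : ℝ≥0∞) ^ 2) ^ (1 / 2 : ℝ) ≤
      2 * ⨆ J : Finset ℕ, (‖∑ j ∈ J, x j‖₊ : ℝ≥0∞) := by
  set S := ⨆ J : Finset ℕ, (‖∑ j ∈ J, x j‖₊ : ℝ≥0∞) with hS
  have hmain : (∑' j : ℕ, (‖x j‖₊ : ℝ≥0∞) ^ 2) ≤ (2 * S) ^ 2 := by
    rw [ENNReal.tsum_eq_iSup_sum]
    refine iSup_le fun J => ?_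
    obtain ⟨K, hK, hle⟩ := key_sign_split x J
    have h1 : ∑ j ∈ J, (‖x j‖₊ : ℝ≥0∞) ^ 2 ≤
        (‖(∑ j ∈ K, x j) - ∑ j ∈ J \ K, x j‖₊ : ℝ≥0∞) ^ 2 := by
      have h0 : ∑ j ∈ J, ‖x j‖₊ ^ 2 ≤
          ‖(∑ j ∈ K, x j) - ∑ j ∈ J \ K, x j‖₊ ^ 2 := by
        rw [← NNReal.coe_le_coe]
        push_cast
        simpa using hle
      exact_mod_cast h0
    refine h1.trans ?_
    have h2 : (‖(∑ j ∈ K, x j) - ∑ j ∈ J \ K, x j‖₊ : ℝ≥0∞) ≤ 2 * S := by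
      calc (‖(∑ j ∈ K, x j) - ∑ j ∈ J \ K, x j‖₊ : ℝ≥0∞)
          ≤ (‖∑ j ∈ K, x j‖₊ : ℝ≥0∞) + (‖∑ j ∈ J \ K, x j‖₊ : ℝ≥0∞) := by
            exact_mod_cast nnnorm_sub_le _ _
        _ ≤ S + S := add_le_add (le_iSup (fun J : Finset ℕ => (‖∑ j ∈ J, x j‖₊ : ℝ≥0∞)) K)
            (le_iSup (fun J : Finset ℕ => (‖∑ j ∈ J, x j‖₊ : ℝ≥0∞)) (J \ K))
        _ = 2 * S := (two_mul S).symm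
    exact pow_le_pow_left₀ zero_le h2 2
  calc (∑' j : ℕ, (‖x j‖₊ : ℝ≥0∞) ^ 2) ^ (1 / 2 : ℝ)
      ≤ ((2 * S) ^ 2) ^ (1 / 2 : ℝ) := ENNReal.rpow_le_rpow hmain (by norm_num)
    _ = 2 * S := by
        rw [← ENNReal.rpow_natCast (2 * S) 2, ← ENNReal.rpow_mul]
        norm_num
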